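/- arXiv:0905.0156 — 2 statements merged into one kernel-verified Lean document; each statement's English description precedes it below -/
import Mathlib

section
/- For every real number η with 0 ≤ η < 1/2, the infinite product ∏_{n=1}^{∞} (1 − 2ηⁿ) converges and satisfies ∏_{n=1}^{∞} (1 − 2ηⁿ) ≥ (1 − 2η)^{1/(1−η)}. -/
open Real
set_option maxHeartbeats 1000000

/-- For `0 ≤ η < 1/2` the infinite product `∏_{n ≥ 1} (1 − 2ηⁿ)`
converges and is at least `(1 − 2η)^{1/(1−η)}`. -/
theorem infinite_product_lower_bound
    (η : ℝ) (h0 : 0 ≤ η) (h1 : η < 1 / 2) :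
    Multipliable (fun n : ℕ => 1 - 2 * η ^ (n + 1)) ∧
    (1 - 2 * η) ^ ((1 : ℝ) / (1 - η)) ≤ ∏' n : ℕ, (1 - 2 * η ^ (n + 1)) := by
  set f : ℕ → ℝ := fun n => 1 - 2 * η ^ (n + 1) with hf
  have hb : (0 : ℝ) < 1 - 2 * η := by linarith
  have hη1 : η < 1 := by linarith
  have hpowle : ∀ n : ℕ, η ^ (n + 1) ≤ η := fun n =>
    pow_le_of_le_one h0 hη1.le (Nat.succ_ne_zero n)
  have hfpos : ∀ n : ℕ, 0 < f n := fun n => by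
    have := hpowle n; simp only [hf]; nlinarith
  have hfle1 : ∀ n : ℕ, f n ≤ 1 := fun n => by
    have : 0 ≤ η ^ (n + 1) := pow_nonneg h0 _
    simp only [hf]; nlinarith
  -- Bernoulli: (1-2η)^(η^n) ≤ f n
  have hkey : ∀ n : ℕ, (1 - 2 * η) ^ (η ^ n) ≤ f n := by
    intro n
    have hp1 : (0:ℝ) ≤ η ^ n := pow_nonneg h0 _
    have hp2 : η ^ n ≤ 1 := pow_le_one₀ h0 hη1.le
    have hs : (-1 : ℝ) ≤ -(2 * η) := by linarith
    have := rpow_one_add_le_one_add_mul_self hs hp1 hp2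
    calc (1 - 2 * η) ^ (η ^ n) = (1 + -(2 * η)) ^ (η ^ n) := by ring_nf
      _ ≤ 1 + η ^ n * -(2 * η) := this
      _ = f n := by simp only [hf]; ring
  -- log bounds
  have hlog_lb : ∀ n : ℕ, η ^ n * Real.log (1 - 2 * η) ≤ Real.log (f n) := by
    intro n
    have h := Real.log_le_log (Real.rpow_pos_of_pos hb _) (hkey n)
    rwa [Real.log_rpow hb] at h
  have hlog_ub : ∀ n : ℕ, Real.log (f n) ≤ 0 := fun n =>
    Real.log_nonpos (hfpos n).le (hfle1 n)
  have hgeo : Summable (fun n : ℕ => η ^ n) := summable_geometric_of_lt_one h0 hη1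
  have hlb_summable : Summable (fun n : ℕ => η ^ n * Real.log (1 - 2 * η)) :=
    hgeo.mul_right _
  have hsum : Summable (fun n : ℕ => Real.log (f n)) := by
    have h1 : Summable (fun n : ℕ => -Real.log (f n)) :=
      Summable.of_nonneg_of_le (fun n => neg_nonneg.mpr (hlog_ub n))
        (fun n => by have := hlog_lb n; linarith) hlb_summable.neg
    have h2 := h1.neg
    simpa using h2
  -- Multipliable via exp of HasSum
  have hprod : HasProd f (Real.exp (∑' n, Real.log (f n))) := by
    have h := hsum.hasSum.rexp
    have hfn : (Real.exp ∘ fun n => Real.log (f n)) = f :=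
      funext fun n => Real.exp_log (hfpos n)
    rwa [hfn] at h
  have hmult : Multipliable f := ⟨_, hprod⟩
  refine ⟨hmult, ?_⟩
  rw [hprod.tprod_eq]
  have htsum_le : ∑' n, η ^ n * Real.log (1 - 2 * η) ≤ ∑' n, Real.log (f n) :=
    Summable.tsum_le_tsum hlog_lb hlb_summable hsum
  have hgeo_sum : ∑' n : ℕ, η ^ n = (1 - η)⁻¹ := tsum_geometric_of_lt_one h0 hη1
  have hlhs : (1 - 2 * η) ^ ((1 : ℝ) / (1 - η))
      = Real.exp (∑' n, η ^ n * Real.log (1 - 2 * η)) := by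
    rw [tsum_mul_right, hgeo_sum, Real.rpow_def_of_pos hb]
    ring_nf
  rw [hlhs]
  exact Real.exp_le_exp.mpr htsum_le
end

section
/- Let d ≥ 2 and let Aut(T_d) denote the automorphism group of the rooted d-ary tree, i.e. the group of bijections of List (Fin d) that preserve list length and the prefix relation. For each n ≥ 1 let sgn_n(g) ∈ {±1} be the sign of the permutation that g induces on the level set L(n) = (Fin d)^n. Then the group homomorphism g ↦ (sgn_n(g))_{n ≥ 1} from Aut(T_d) to the product ∏_{n ≥ 1} {±1} is surjective: for every sequence ε : {n ≥ 1} → {±1} there exists g ∈ Aut(T_d) with sgn_n(g) = ε(n) for all n ≥ 1. (In particular, Aut(T_d) is not topologically finitely generated.) -/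
instance instFintypeLevel (d n : ℕ) : Fintype {l : List (Fin d) // l.length = n} := by
  apply Fintype.ofSurjective
    (fun f : Fin n → Fin d =>
      (⟨List.ofFn f, List.length_ofFn (f := f)⟩ : {l : List (Fin d) // l.length = n}))
  rintro ⟨l, rfl⟩
  exact ⟨l.get, Subtype.ext (List.ofFn_get l)⟩

/-- The permutation induced on the level-`n` vertex set by a length-preserving bijection of
the rooted `d`-ary tree. -/
def levelPermOf {d : ℕ} (g : Equiv.Perm (List (Fin d)))
    (hg : ∀ l, (g l).length = l.length) (n : ℕ) :
    Equiv.Perm {l : List (Fin d) // l.length = n} :=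
  g.subtypePerm (fun l => by rw [hg l])

namespace TreeAut

variable {d : ℕ}

/-- Apply a "portrait" of permutations to a list. -/
def act : (List (Fin d) → Equiv.Perm (Fin d)) → List (Fin d) → List (Fin d)
  | _, [] => []
  | π, a :: t => π [] a :: act (fun v => π (a :: v)) t

@[simp] lemma act_nil (π : List (Fin d) → Equiv.Perm (Fin d)) : act π [] = [] := rfl

@[simp] lemma act_cons (π : List (Fin d) → Equiv.Perm (Fin d)) (a : Fin d) (t : List (Fin d)) :
    act π (a :: t) = π [] a :: act (fun v => π (a :: v)) t := rfl

lemma length_act (π : List (Fin d) → Equiv.Perm (Fin d)) (l : List (Fin d)) :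
    (act π l).length = l.length := by
  induction l generalizing π with
  | nil => rfl
  | cons a t ih => simp [ih]

lemma act_injective (π : List (Fin d) → Equiv.Perm (Fin d)) : Function.Injective (act π) := by
  intro l₁ l₂ h
  induction l₁ generalizing l₂ π with
  | nil =>
    cases l₂ with
    | nil => rfl
    | cons b t => simp at h
  | cons a t ih =>
    cases l₂ with
    | nil => simp at h
    | cons b t' =>
      simp only [act_cons, List.cons.injEq] at h
      obtain ⟨h1, h2⟩ := h
      have hab : a = b := (π []).injective h1
      subst hab
      exact congrArg _ (ih _ h2)

lemma act_surjective (π : List (Fin d) → Equiv.Perm (Fin d)) : Function.Surjective (act π) := by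
  intro l
  induction l generalizing π with
  | nil => exact ⟨[], rfl⟩
  | cons b t ih =>
    obtain ⟨m, hm⟩ := ih (fun v => π ((π []).symm b :: v))
    exact ⟨(π []).symm b :: m, by simp [hm]⟩

lemma act_append (π : List (Fin d) → Equiv.Perm (Fin d)) (u w : List (Fin d)) :
    act π (u ++ w) = act π u ++ act (fun v => π (u ++ v)) w := by
  induction u generalizing π with
  | nil => rfl
  | cons a t ih => simp [ih]

lemma act_one (l : List (Fin d)) : act (fun _ => (1 : Equiv.Perm (Fin d))) l = l := by
  induction l with
  | nil => rfl
  | cons a t ih => simp [ih]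

/-- The tree automorphism defined by a portrait. -/
noncomputable def autOf (π : List (Fin d) → Equiv.Perm (Fin d)) : Equiv.Perm (List (Fin d)) :=
  Equiv.ofBijective (act π) ⟨act_injective π, act_surjective π⟩

@[simp] lemma autOf_apply (π : List (Fin d) → Equiv.Perm (Fin d)) (l : List (Fin d)) :
    autOf π l = act π l := rfl

lemma length_autOf (π : List (Fin d) → Equiv.Perm (Fin d)) (l : List (Fin d)) :
    (autOf π l).length = l.length := length_act π l

end TreeAut

namespace TreeAut

variable {d : ℕ}

lemma card_level (d m : ℕ) : Fintype.card {l : List (Fin d) // l.length = m} = d ^ m := by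
  have e : {l : List (Fin d) // l.length = m} ≃ (Fin m → Fin d) :=
    { toFun := fun l => fun i => l.1.get (Fin.cast l.2.symm i)
      invFun := fun f => ⟨List.ofFn f, List.length_ofFn (f := f)⟩
      left_inv := by
        rintro ⟨l, rfl⟩
        apply Subtype.ext
        simp [List.ofFn_get]
      right_inv := by
        intro f
        funext i
        simp [List.get_ofFn] }
  rw [Fintype.card_congr e]
  simp [Fintype.card_fun]

/-- head/tail equivalence on levels. -/
def consEquiv (d m : ℕ) :
    {l : List (Fin d) // l.length = m + 1} ≃ Fin d × {l : List (Fin d) // l.length = m} where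
  toFun := fun l =>
    match l with
    | ⟨[], h⟩ => absurd h (by simp)
    | ⟨a :: t, h⟩ => (a, ⟨t, by simpa using h⟩)
  invFun := fun p => ⟨p.1 :: p.2.1, by simp [p.2.2]⟩
  left_inv := by rintro ⟨(_ | ⟨a, t⟩), h⟩ <;> simp at h ⊢
  right_inv := by rintro ⟨a, t, ht⟩; rfl

lemma level_succ_conj (π : List (Fin d) → Equiv.Perm (Fin d)) (m : ℕ) :
    (consEquiv d m).permCongr (levelPermOf (autOf π) (length_autOf π) (m + 1)) =
      Equiv.prodCongrLeft (fun _ : {l : List (Fin d) // l.length = m} => π []) *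
        Equiv.prodCongrRight
          (fun a : Fin d =>
            levelPermOf (autOf (fun v => π (a :: v))) (length_autOf _) m) := by
  apply Equiv.ext
  rintro ⟨a, t, ht⟩
  rfl

lemma sign_level_succ (π : List (Fin d) → Equiv.Perm (Fin d)) (m : ℕ) :
    Equiv.Perm.sign (levelPermOf (autOf π) (length_autOf π) (m + 1)) =
      Equiv.Perm.sign (π []) ^ d ^ m *
        ∏ a : Fin d,
          Equiv.Perm.sign (levelPermOf (autOf (fun v => π (a :: v))) (length_autOf _) m) := by
  rw [← Equiv.Perm.sign_permCongr (consEquiv d m), level_succ_conj, map_mul,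
    Equiv.Perm.sign_prodCongrLeft, Equiv.Perm.sign_prodCongrRight]
  congr 1
  rw [Finset.prod_const, Finset.card_univ, card_level]

end TreeAut

namespace TreeAut

variable {d : ℕ}

lemma levelPermOf_zero (g : Equiv.Perm (List (Fin d))) (hg : ∀ l, (g l).length = l.length) :
    levelPermOf g hg 0 = 1 := by
  apply Equiv.ext
  rintro ⟨l, hl⟩
  apply Subtype.ext
  have h1 : g l = [] := List.length_eq_zero_iff.mp (by rw [hg l, hl])
  have h2 : l = [] := List.length_eq_zero_iff.mp hl
  show g l = l
  rw [h1, h2]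

lemma levelPermOf_one_portrait (m : ℕ) :
    levelPermOf (autOf (fun _ => (1 : Equiv.Perm (Fin d)))) (length_autOf _) m = 1 := by
  apply Equiv.ext
  rintro ⟨l, hl⟩
  exact Subtype.ext (act_one l)

/-- The portrait supported on the all-zero spine, swapping the first two children at
spine level `n` exactly when `s n = -1`. -/
def spine [NeZero d] (s : ℕ → ℤˣ) : List (Fin d) → Equiv.Perm (Fin d) := fun v =>
  if v = List.replicate v.length 0 ∧ s v.length = -1 then Equiv.swap 0 1 else 1

lemma zero_ne_one_fin (hd : 2 ≤ d) [NeZero d] : (0 : Fin d) ≠ 1 := by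
  intro h
  have h2 := congrArg Fin.val h
  rw [Fin.val_zero, Fin.val_one', Nat.mod_eq_of_lt (by omega)] at h2
  omega

lemma sign_spine_head (hd : 2 ≤ d) [NeZero d] (s : ℕ → ℤˣ) :
    Equiv.Perm.sign (spine (d := d) s []) = s 0 := by
  rcases Int.units_eq_one_or (s 0) with h | h <;>
    simp [spine, h, Equiv.Perm.sign_swap (zero_ne_one_fin hd)]

lemma spine_cons_zero [NeZero d] (s : ℕ → ℤˣ) :
    (fun v => spine s ((0 : Fin d) :: v)) = spine (fun k => s (k + 1)) := by
  funext v
  simp only [spine, List.length_cons, List.replicate_succ, List.cons.injEq, true_and]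

lemma spine_cons_ne [NeZero d] (s : ℕ → ℤˣ) (a : Fin d) (ha : a ≠ 0) :
    (fun v => spine s (a :: v)) = fun _ => (1 : Equiv.Perm (Fin d)) := by
  funext v
  simp only [spine, List.length_cons, List.replicate_succ, List.cons.injEq]
  rw [if_neg]
  rintro ⟨⟨h, -⟩, -⟩
  exact ha h

lemma sign_spine (hd : 2 ≤ d) [NeZero d] (m : ℕ) (s : ℕ → ℤˣ) :
    Equiv.Perm.sign (levelPermOf (autOf (spine (d := d) s)) (length_autOf _) m) =
      ∏ j ∈ Finset.range m, s j ^ d ^ (m - 1 - j) := by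
  induction m generalizing s with
  | zero => rw [levelPermOf_zero]; simp
  | succ m ih =>
    rw [sign_level_succ, sign_spine_head hd]
    have hprod : (∏ a : Fin d,
        Equiv.Perm.sign (levelPermOf (autOf (fun v => spine s (a :: v))) (length_autOf _) m)) =
        ∏ j ∈ Finset.range m, s (j + 1) ^ d ^ (m - 1 - j) := by
      rw [Finset.prod_eq_single 0 ?h ?h0]
      · rw [spine_cons_zero]; exact ih _
      case h =>
        intro a _ ha
        rw [spine_cons_ne s a ha, levelPermOf_one_portrait, map_one]
      case h0 =>
        intro h
        exact absurd (Finset.mem_univ _) h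
    rw [hprod, Finset.prod_range_succ']
    have h3 : ∀ j ∈ Finset.range m, s (j + 1) ^ d ^ (m + 1 - 1 - (j + 1)) =
        s (j + 1) ^ d ^ (m - 1 - j) := by
      intro j hj
      congr 2 <;> omega
    rw [Finset.prod_congr rfl h3]
    have h4 : s 0 ^ d ^ (m + 1 - 1 - 0) = s 0 ^ d ^ m := by congr 2 <;> omega
    rw [h4, mul_comm]

/-- The sequence of spine signs realizing a prescribed sequence of level signs. -/
def sb (ε : ℕ → ℤˣ) (d : ℕ) : ℕ → ℤˣ
  | 0 => ε 0
  | n + 1 => ε (n + 1) * ε n ^ d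

lemma prod_sb (ε : ℕ → ℤˣ) (d : ℕ) (n : ℕ) :
    ∏ j ∈ Finset.range (n + 1), sb ε d j ^ d ^ (n - j) = ε n := by
  induction n with
  | zero => simp [sb]
  | succ n ih =>
    rw [Finset.prod_range_succ]
    have h1 : ∀ j ∈ Finset.range (n + 1), sb ε d j ^ d ^ (n + 1 - j) =
        (sb ε d j ^ d ^ (n - j)) ^ d := by
      intro j hj
      simp only [Finset.mem_range] at hj
      rw [← pow_mul]
      congr 1
      rw [← pow_succ]
      congr 1
      omega
    rw [Finset.prod_congr rfl h1, Finset.prod_pow, ih]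
    have : n + 1 - (n + 1) = 0 := by omega
    rw [this, pow_zero, pow_one, sb, mul_left_comm, ← pow_two, Int.units_sq, mul_one]

end TreeAut

/-- The homomorphism `Aut(T_d) → ∏_{n ≥ 1} {±1}` recording the signs of
the permutations induced on the levels is surjective (hence `Aut(T_d)` is not topologically
finitely generated): automorphisms are bijections of `List (Fin d)` preserving length and
the prefix relation. -/
theorem signs_surjective {d : ℕ} (hd : 2 ≤ d) :
    ∀ ε : ℕ → ℤˣ,
      ∃ (g : Equiv.Perm (List (Fin d))) (hg : ∀ l, (g l).length = l.length),
        (∀ u v : List (Fin d), u <+: v → g u <+: g v) ∧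
        ∀ n : ℕ, Equiv.Perm.sign (levelPermOf g hg (n + 1)) = ε n := by
  intro ε
  haveI : NeZero d := ⟨by omega⟩
  refine ⟨TreeAut.autOf (TreeAut.spine (TreeAut.sb ε d)),
    TreeAut.length_autOf _, ?_, ?_⟩
  · rintro u v ⟨w, rfl⟩
    exact ⟨_, (TreeAut.act_append _ u w).symm⟩
  · intro n
    rw [TreeAut.sign_spine hd (n + 1)]
    have : ∀ j, (n + 1) - 1 - j = n - j := fun j => by omega
    calc ∏ j ∈ Finset.range (n + 1), TreeAut.sb ε d j ^ d ^ (n + 1 - 1 - j)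
        = ∏ j ∈ Finset.range (n + 1), TreeAut.sb ε d j ^ d ^ (n - j) := by
          apply Finset.prod_congr rfl; intro j _; rw [this j]
      _ = ε n := TreeAut.prod_sb ε d n
end
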